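/- Let f : 2^N → ℝ≥0 be submodular, O an optimal solution with f(O) = OPT, A, B ⊆ N disjoint subsets, and α ≥ 1, c > 0 real constants. Suppose (i) f(O ∪ A) − f(A) ≤ OPT/c, (ii) f((O \ A) ∪ B) − f(B) ≤ OPT/c, and (iii) f(O ∩ A) ≤ α·m where m := max{f(A), f(B), m'} for some m' ≥ 0 with α·m' ≥ f(O ∩ A). Then OPT ≤ (α + 2)·m + 2·OPT/c; in particular if c = 4 + α then m ≥ OPT/(4 + α). -/
import Mathlib


theorem stmt_4 {N : Type*} [Fintype N] [DecidableEq N] (f : Finset N → ℝ)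
    (hsub : ∀ A B : Finset N, f A + f B ≥ f (A ∪ B) + f (A ∩ B))
    (hnn : ∀ S : Finset N, 0 ≤ f S)
    (O A B : Finset N) (hdisj : A ∩ B = ∅)
    (OPT : ℝ) (hOPT : OPT = f O)
    (α c : ℝ) (hα : 1 ≤ α) (hc : 0 < c)
    (m' : ℝ) (hm' : 0 ≤ m')
    (m : ℝ) (hm : m = max (max (f A) (f B)) m')
    (h1 : f (O ∪ A) - f A ≤ OPT / c)
    (h2 : f ((O \ A) ∪ B) - f B ≤ OPT / c)
    (h3 : f (O ∩ A) ≤ α * m')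
    : OPT ≤ (α + 2) * m + 2 * OPT / c ∧ (c = 4 + α → m ≥ OPT / (4 + α)) := by
  rw [Finset.eq_empty_iff_forall_notMem] at hdisj
  have e1 : (O ∩ A) ∪ (O \ A) = O := by
    ext x; simp only [Finset.mem_union, Finset.mem_inter, Finset.mem_sdiff]; tauto
  have e2 : (O ∩ A) ∩ (O \ A) = ∅ := by
    ext x; simp only [Finset.mem_inter, Finset.mem_sdiff, Finset.notMem_empty]; tauto
  have e3 : (O ∪ A) ∩ ((O \ A) ∪ B) = O \ A := by
    ext x
    have := hdisj x
    simp only [Finset.mem_inter, Finset.mem_union, Finset.mem_sdiff] at *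
    tauto
  have hkey1 := hsub (O ∩ A) (O \ A)
  rw [e1, e2] at hkey1
  have hkey2 := hsub (O ∪ A) ((O \ A) ∪ B)
  rw [e3] at hkey2
  have h0 : 0 ≤ f ((O ∪ A) ∪ ((O \ A) ∪ B)) := hnn _
  have hemp : 0 ≤ f (∅ : Finset N) := hnn _
  have hfA : f A ≤ m := by rw [hm]; exact le_max_of_le_left (le_max_left _ _)
  have hfB : f B ≤ m := by rw [hm]; exact le_max_of_le_left (le_max_right _ _)
  have hm'm : m' ≤ m := by rw [hm]; exact le_max_right _ _
  have hαm : α * m' ≤ α * m := by nlinarith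
  have hmain : OPT ≤ (α + 2) * m + 2 * OPT / c := by
    have : 2 * OPT / c = OPT / c + OPT / c := by ring
    rw [this]
    linarith
  refine ⟨hmain, fun hceq => ?_⟩
  subst hceq
  have hcpos : (0:ℝ) < 4 + α := by linarith
  rw [ge_iff_le, div_le_iff₀ hcpos]
  have hdiv : 2 * OPT / (4 + α) * (4 + α) = 2 * OPT := by
    field_simp
  nlinarith [mul_le_mul_of_nonneg_right hmain (le_of_lt hcpos)]
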